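/- arXiv:1503.02777 — 4 statements merged into one kernel-verified Lean document; each statement's English description precedes it below -/
import Mathlib

section
/- Let n : ℕ and let ω : Fin n → ℝ be linearly independent over ℚ, and let φ : Fin n → ℝ. Then for every nonempty open set U ⊆ (Fin n → AddCircle (1 : ℝ)) and every t₀ ∈ ℝ there exists t ≥ t₀ with Φ t ∈ U, where Φ t = fun i => ((φ i + ω i * t : ℝ) : AddCircle 1); i.e., the set of hitting times {t : ℝ | Φ t ∈ U} is unbounded above. -/
open MeasureTheory Filter Set Topology

noncomputable section PhaseFlowAux

namespace PhaseFlowAux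

instance : IsProbabilityMeasure (volume : Measure (AddCircle (1:ℝ))) :=
  ⟨by rw [AddCircle.measure_univ]; norm_num⟩

variable {n : ℕ}

/-- Characters of the `n`-torus. -/
def chi (n : ℕ) (m : Fin n → ℤ) : C(Fin n → AddCircle (1:ℝ), ℂ) :=
  ⟨fun x => ∏ i, fourier (m i) (x i),
    continuous_finset_prod _ fun i _ =>
      (map_continuous (fourier (m i))).comp (continuous_apply i)⟩

lemma chi_apply (m : Fin n → ℤ) (x : Fin n → AddCircle (1:ℝ)) :
    chi n m x = ∏ i, fourier (m i) (x i) := rfl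

lemma chi_zero : chi n 0 = 1 := by
  ext x; simp [chi_apply, fourier_zero]

lemma chi_add (m m' : Fin n → ℤ) : chi n (m + m') = chi n m * chi n m' := by
  ext x
  simp [chi_apply, fourier_add, Finset.prod_mul_distrib]

lemma star_chi (m : Fin n → ℤ) : star (chi n m) = chi n (-m) := by
  ext x
  simp [chi_apply, fourier_neg, map_prod]

/-- Span of characters. -/
def charSpan (n : ℕ) : Submodule ℂ C(Fin n → AddCircle (1:ℝ), ℂ) :=
  Submodule.span ℂ (Set.range (chi n))

lemma mul_mem_charSpan {f g : C(Fin n → AddCircle (1:ℝ), ℂ)}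
    (hf : f ∈ charSpan n) (hg : g ∈ charSpan n) : f * g ∈ charSpan n := by
  refine Submodule.span_induction (p := fun f _ => f * g ∈ charSpan n) ?_ ?_ ?_ ?_ hf
  · rintro _ ⟨m, rfl⟩
    refine Submodule.span_induction (p := fun g _ => chi n m * g ∈ charSpan n) ?_ ?_ ?_ ?_ hg
    · rintro _ ⟨m', rfl⟩
      rw [← chi_add]
      exact Submodule.subset_span ⟨m + m', rfl⟩
    · simpa using (charSpan n).zero_mem
    · intro a b _ _ ha hb; rw [mul_add]; exact add_mem ha hb
    · intro c a _ ha; rw [mul_smul_comm]; exact Submodule.smul_mem _ _ ha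
  · simpa using (charSpan n).zero_mem
  · intro a b _ _ ha hb; rw [add_mul]; exact add_mem ha hb
  · intro c a _ ha; rw [smul_mul_assoc]; exact Submodule.smul_mem _ _ ha

/-- The star subalgebra of trigonometric polynomials on the torus. -/
def charAlgebra (n : ℕ) : StarSubalgebra ℂ C(Fin n → AddCircle (1:ℝ), ℂ) where
  carrier := charSpan n
  mul_mem' := mul_mem_charSpan
  one_mem' := chi_zero ▸ Submodule.subset_span ⟨0, rfl⟩
  add_mem' := fun h1 h2 => add_mem h1 h2
  zero_mem' := (charSpan n).zero_mem
  algebraMap_mem' := fun c => by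
    have h1 : (1 : C(Fin n → AddCircle (1:ℝ), ℂ)) ∈ charSpan n :=
      chi_zero ▸ Submodule.subset_span ⟨0, rfl⟩
    simpa [Algebra.algebraMap_eq_smul_one] using (charSpan n).smul_mem c h1
  star_mem' := fun {f} hf => by
    refine Submodule.span_induction (p := fun f _ => star f ∈ charSpan n) ?_ ?_ ?_ ?_ hf
    · rintro _ ⟨m, rfl⟩; rw [star_chi]; exact Submodule.subset_span ⟨-m, rfl⟩
    · simpa using (charSpan n).zero_mem
    · intro a b _ _ ha hb; rw [star_add]; exact add_mem ha hb
    · intro c a _ ha; rw [star_smul]; exact Submodule.smul_mem _ _ ha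

lemma charAlgebra_separatesPoints : (charAlgebra n).SeparatesPoints := by
  intro x y hxy
  obtain ⟨i, hi⟩ : ∃ i, x i ≠ y i := by
    by_contra h; push_neg at h; exact hxy (funext h)
  have hval : ∀ z : Fin n → AddCircle (1:ℝ), chi n (Pi.single i 1) z = fourier 1 (z i) := by
    intro z
    rw [chi_apply]
    rw [Finset.prod_eq_single i (fun j _ hj => by simp [Pi.single_eq_of_ne hj, fourier_zero])
      (by simp)]
    simp
  refine ⟨_, ⟨chi n (Pi.single i 1), Submodule.subset_span ⟨_, rfl⟩, rfl⟩, ?_⟩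
  show chi n (Pi.single i 1) x ≠ chi n (Pi.single i 1) y
  rw [hval, hval]
  intro h
  apply hi
  have h' : (AddCircle.toCircle ((1:ℤ) • x i) : ℂ) = (AddCircle.toCircle ((1:ℤ) • y i) : ℂ) := by
    rw [← fourier_apply, ← fourier_apply]; exact h
  have := AddCircle.injective_toCircle (one_ne_zero (α := ℝ)) (Subtype.coe_injective h')
  simpa using this

lemma fourier_integral_zero {k : ℤ} (hk : k ≠ 0) :
    ∫ z : AddCircle (1:ℝ), fourier k z = 0 := by
  rw [← AddCircle.integral_preimage 1 0 (fun z : AddCircle (1:ℝ) => fourier k z)]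
  rw [← intervalIntegral.integral_of_le (by norm_num : (0:ℝ) ≤ 0 + 1)]
  have hc : (2 * (Real.pi:ℂ) * Complex.I * k) ≠ 0 := by
    refine mul_ne_zero (mul_ne_zero (mul_ne_zero two_ne_zero ?_) Complex.I_ne_zero)
      (Int.cast_ne_zero.2 hk)
    exact_mod_cast Complex.ofReal_ne_zero.2 Real.pi_ne_zero
  have heq : ∀ x : ℝ, (fourier k (↑x : AddCircle (1:ℝ)) : ℂ)
      = Complex.exp ((2 * (Real.pi:ℂ) * Complex.I * k) * x) := by
    intro x
    rw [fourier_coe_apply]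
    norm_num
  rw [intervalIntegral.integral_congr (g := fun x : ℝ =>
    Complex.exp ((2 * (Real.pi:ℂ) * Complex.I * k) * x)) (fun x _ => heq x)]
  rw [integral_exp_mul_complex hc]
  have h1 : (2 * (Real.pi:ℂ) * Complex.I * k) * ((0:ℝ) + 1 : ℝ)
      = (k:ℂ) * (2 * Real.pi * Complex.I) := by push_cast; ring
  have h2 : (2 * (Real.pi:ℂ) * Complex.I * k) * ((0:ℝ):ℂ) = 0 := by push_cast; ring
  rw [h1, h2, Complex.exp_int_mul_two_pi_mul_I, Complex.exp_zero, sub_self, zero_div]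

lemma chi_integral_zero {m : Fin n → ℤ} (hm : m ≠ 0) :
    ∫ x : Fin n → AddCircle (1:ℝ), chi n m x = 0 := by
  have h : ∫ x : Fin n → AddCircle (1:ℝ), ∏ i, fourier (m i) (x i)
      = ∏ i, ∫ z : AddCircle (1:ℝ), fourier (m i) z :=
    integral_fintype_prod_eq_prod (fun i z => fourier (m i) z)
  rw [show (∫ x : Fin n → AddCircle (1:ℝ), chi n m x)
      = ∫ x : Fin n → AddCircle (1:ℝ), ∏ i, fourier (m i) (x i) from rfl, h]
  obtain ⟨i, hi⟩ : ∃ i, m i ≠ 0 := by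
    by_contra h'; push_neg at h'; exact hm (funext h')
  exact Finset.prod_eq_zero (Finset.mem_univ i) (fourier_integral_zero hi)

def flow (ω φ : Fin n → ℝ) (t : ℝ) : Fin n → AddCircle (1:ℝ) :=
  fun i => ((φ i + ω i * t : ℝ) : AddCircle (1:ℝ))

lemma continuous_flow (ω φ : Fin n → ℝ) : Continuous (flow ω φ) :=
  continuous_pi fun i => (AddCircle.continuous_mk' 1).comp
    (continuous_const.add (continuous_const.mul continuous_id))

lemma chi_flow (ω φ : Fin n → ℝ) (m : Fin n → ℤ) (t : ℝ) :
    chi n m (flow ω φ t)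
      = Complex.exp (((2 * Real.pi * ∑ i, (m i : ℝ) * φ i : ℝ) : ℂ) * Complex.I)
        * Complex.exp ((((2 * Real.pi * ∑ i, (m i : ℝ) * ω i : ℝ) : ℂ) * Complex.I) * t) := by
  show (∏ i, fourier (m i) (((φ i + ω i * t : ℝ) : AddCircle (1:ℝ)))) = _
  have h1 : ∀ i : Fin n, (fourier (m i) (((φ i + ω i * t : ℝ) : AddCircle (1:ℝ))) : ℂ)
      = Complex.exp ((((2 * Real.pi * ((m i : ℝ) * φ i) : ℝ) : ℂ) * Complex.I)
          + ((((2 * Real.pi * ((m i : ℝ) * ω i) : ℝ) : ℂ) * Complex.I) * t)) := by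
    intro i
    rw [fourier_coe_apply]
    congr 1
    push_cast
    ring
  simp_rw [h1]
  rw [← Complex.exp_sum, ← Complex.exp_add]
  congr 1
  push_cast
  rw [Finset.sum_add_distrib, ← Finset.sum_mul, ← Finset.sum_mul, ← Finset.sum_mul,
    ← Finset.mul_sum, ← Finset.mul_sum]

lemma sum_ne_zero_of_linearIndependent {ω : Fin n → ℝ} (hω : LinearIndependent ℚ ω)
    {m : Fin n → ℤ} (hm : m ≠ 0) : (∑ i, (m i : ℝ) * ω i) ≠ 0 := by
  intro h0
  rw [Fintype.linearIndependent_iff] at hω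
  have hcast : (∑ i, ((m i : ℚ)) • ω i) = ∑ i, (m i : ℝ) * ω i := by
    refine Finset.sum_congr rfl fun i _ => ?_
    rw [Rat.smul_def]
    push_cast
    ring
  have hall := hω (fun i => (m i : ℚ)) (by rw [hcast, h0])
  apply hm
  funext i
  simp only [Pi.zero_apply]
  have h := hall i
  exact_mod_cast h

lemma avg_chi_tendsto {ω : Fin n → ℝ} (hω : LinearIndependent ℚ ω) (φ : Fin n → ℝ)
    (t₀ : ℝ) (m : Fin n → ℤ) :
    Tendsto (fun T : ℝ => (T - t₀)⁻¹ • ∫ t in t₀..T, chi n m (flow ω φ t)) atTop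
      (𝓝 (∫ x, chi n m x)) := by
  rcases eq_or_ne m 0 with rfl | hm
  · have hconst : ∀ t : ℝ, chi n 0 (flow ω φ t) = 1 := fun t => by
      rw [chi_zero]; exact ContinuousMap.one_apply _
    have hint : (∫ x : Fin n → AddCircle (1:ℝ), chi n 0 x) = 1 := by
      simp only [chi_zero, ContinuousMap.one_apply]
      simp
    rw [hint]
    refine Tendsto.congr' ?_ tendsto_const_nhds
    filter_upwards [eventually_gt_atTop t₀] with T hT
    simp only [hconst]
    rw [intervalIntegral.integral_const, smul_smul,
      inv_mul_cancel₀ (ne_of_gt (sub_pos.2 hT)), one_smul]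
  · set r : ℝ := 2 * Real.pi * ∑ i, (m i : ℝ) * ω i with hr
    have hrne : r ≠ 0 :=
      mul_ne_zero (mul_ne_zero two_ne_zero Real.pi_ne_zero)
        (sum_ne_zero_of_linearIndependent hω hm)
    set b : ℂ := (r : ℂ) * Complex.I with hb
    have hbne : b ≠ 0 := mul_ne_zero (Complex.ofReal_ne_zero.2 hrne) Complex.I_ne_zero
    set c : ℂ := Complex.exp (((2 * Real.pi * ∑ i, (m i : ℝ) * φ i : ℝ) : ℂ) * Complex.I)
      with hc
    have hcnorm : ‖c‖ = 1 := Complex.norm_exp_ofReal_mul_I _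
    have hexpnorm : ∀ s : ℝ, ‖Complex.exp (b * s)‖ = 1 := by
      intro s
      rw [show b * (s:ℂ) = ((r * s : ℝ) : ℂ) * Complex.I by push_cast; ring]
      exact Complex.norm_exp_ofReal_mul_I _
    have hflow : ∀ t : ℝ, chi n m (flow ω φ t) = c * Complex.exp (b * t) := fun t =>
      chi_flow ω φ m t
    rw [chi_integral_zero hm]
    apply squeeze_zero_norm' (a := fun T : ℝ => (T - t₀)⁻¹ * (2 / ‖b‖))
      (f := fun T : ℝ => (T - t₀)⁻¹ • ∫ t in t₀..T, chi n m (flow ω φ t))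
    · filter_upwards [eventually_ge_atTop (t₀ + 1)] with T hT
      have h1 : (0:ℝ) < T - t₀ := by linarith
      have hI : (∫ t in t₀..T, chi n m (flow ω φ t))
          = c * ((Complex.exp (b * T) - Complex.exp (b * t₀)) / b) := by
        simp only [hflow]
        rw [intervalIntegral.integral_const_mul]
        congr 1
        exact integral_exp_mul_complex hbne
      rw [hI, norm_smul, Real.norm_eq_abs, abs_of_pos (inv_pos.2 h1)]
      refine mul_le_mul_of_nonneg_left ?_ (le_of_lt (inv_pos.2 h1))
      rw [norm_mul, hcnorm, one_mul, norm_div]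
      gcongr
      calc ‖Complex.exp (b * T) - Complex.exp (b * t₀)‖
          ≤ ‖Complex.exp (b * T)‖ + ‖Complex.exp (b * t₀)‖ := norm_sub_le _ _
        _ = 2 := by rw [hexpnorm, hexpnorm]; norm_num
    · have h2 : Tendsto (fun T : ℝ => (T - t₀)⁻¹) atTop (𝓝 0) := by
        refine Tendsto.comp tendsto_inv_atTop_zero ?_
        exact tendsto_atTop_add_const_right atTop (-t₀) tendsto_id |>.congr
          (fun T => by simp [sub_eq_add_neg])
      simpa using h2.mul_const (2 / ‖b‖)


lemma cm_integrable (u : C(Fin n → AddCircle (1:ℝ), ℂ)) :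
    Integrable (fun x => u x) volume :=
  u.continuous.integrable_of_hasCompactSupport (HasCompactSupport.of_compactSpace _)

lemma avg_tendsto_of_mem {ω : Fin n → ℝ} (hω : LinearIndependent ℚ ω) (φ : Fin n → ℝ)
    (t₀ : ℝ) {g : C(Fin n → AddCircle (1:ℝ), ℂ)} (hg : g ∈ charSpan n) :
    Tendsto (fun T : ℝ => (T - t₀)⁻¹ • ∫ t in t₀..T, g (flow ω φ t)) atTop
      (𝓝 (∫ x, g x)) := by
  refine Submodule.span_induction (p := fun g _ => Tendsto
    (fun T : ℝ => (T - t₀)⁻¹ • ∫ t in t₀..T, g (flow ω φ t)) atTop (𝓝 (∫ x, g x)))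
    ?_ ?_ ?_ ?_ hg
  · rintro _ ⟨m, rfl⟩; exact avg_chi_tendsto hω φ t₀ m
  · simp only [ContinuousMap.zero_apply, intervalIntegral.integral_zero, smul_zero,
      integral_zero]
    exact tendsto_const_nhds
  · intro a b _ _ ha hb
    simp only [ContinuousMap.add_apply]
    rw [integral_add (cm_integrable a) (cm_integrable b)]
    refine (ha.add hb).congr fun T => ?_
    have hIa : IntervalIntegrable (fun t => a (flow ω φ t)) volume t₀ T :=
      (a.continuous.comp (continuous_flow ω φ)).intervalIntegrable _ _
    have hIb : IntervalIntegrable (fun t => b (flow ω φ t)) volume t₀ T :=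
      (b.continuous.comp (continuous_flow ω φ)).intervalIntegrable _ _
    rw [intervalIntegral.integral_add hIa hIb, smul_add]
  · intro cc a _ ha
    simp only [ContinuousMap.smul_apply]
    rw [integral_smul]
    refine (ha.const_smul cc).congr fun T => ?_
    rw [intervalIntegral.integral_smul, smul_comm]

end PhaseFlowAux

open PhaseFlowAux in
/-- With incommensurable frequencies, every nonempty open set of phase configurations is hit
at arbitrarily late times by the phase flow: the set of hitting times is unbounded above. -/
theorem phase_flow_hitting_times_unbounded (n : ℕ) (ω : Fin n → ℝ)
    (hω : LinearIndependent ℚ ω) (φ : Fin n → ℝ) :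
    ∀ U : Set (Fin n → AddCircle (1 : ℝ)), IsOpen U → U.Nonempty →
      ∀ t₀ : ℝ, ∃ t : ℝ, t₀ ≤ t ∧
        (fun i => ((φ i + ω i * t : ℝ) : AddCircle (1 : ℝ))) ∈ U := by
  intro U hU hne t₀
  obtain ⟨x₀, hx₀⟩ := hne
  obtain ⟨f, hf0, hf1, hficc⟩ := exists_continuous_zero_one_of_isClosed
    (isClosed_compl_iff.2 hU) (isClosed_singleton (x := x₀))
    (Set.disjoint_singleton_right.2 (by simp [hx₀]))
  have hint : Integrable (fun x => f x) volume :=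
    f.continuous.integrable_of_hasCompactSupport (HasCompactSupport.of_compactSpace _)
  have hIpos : 0 < ∫ x, f x := by
    rw [integral_pos_iff_support_of_nonneg (fun x => (hficc x).1) hint]
    have hopen : IsOpen (Function.support f) := by
      rw [Function.support_eq_preimage]
      exact (isOpen_compl_singleton).preimage f.continuous
    refine hopen.measure_pos volume ⟨x₀, ?_⟩
    have : f x₀ = 1 := hf1 (Set.mem_singleton _)
    simp [Function.mem_support, this]
  set I0 := ∫ x, f x with hI0
  set ε := I0 / 4 with hε
  have hεpos : 0 < ε := by rw [hε]; positivity
  set fC : C(Fin n → AddCircle (1:ℝ), ℂ) :=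
    ⟨fun x => (f x : ℂ), Complex.continuous_ofReal.comp f.continuous⟩ with hfC
  have htop := ContinuousMap.starSubalgebra_topologicalClosure_eq_top_of_separatesPoints
    (charAlgebra n) charAlgebra_separatesPoints
  have hmem : fC ∈ closure ((charSpan n : Set C(Fin n → AddCircle (1:ℝ), ℂ))) := by
    have h1 : fC ∈ (charAlgebra n).topologicalClosure := by rw [htop]; trivial
    exact h1
  obtain ⟨g, hgmem, hgdist⟩ := Metric.mem_closure_iff.1 hmem ε hεpos
  have hgP := avg_tendsto_of_mem hω φ t₀ hgmem
  set L := ∫ x, g x with hL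
  have hLclose : dist L ((I0 : ℝ) : ℂ) ≤ ε := by
    have hfCint : (∫ x, fC x) = ((I0 : ℝ) : ℂ) := integral_ofReal (f := fun x => f x)
    have heq : L - ((I0 : ℝ) : ℂ) = ∫ x, (g x - fC x) := by
      rw [integral_sub (cm_integrable g) (cm_integrable fC), hfCint]
    rw [dist_eq_norm, heq]
    calc ‖∫ x, (g x - fC x)‖ ≤ ∫ x, ‖g x - fC x‖ :=
          norm_integral_le_integral_norm _
      _ ≤ ∫ _x : (Fin n → AddCircle (1:ℝ)), ε := by
          refine integral_mono ((cm_integrable g).sub (cm_integrable fC)).norm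
            (integrable_const ε) fun x => ?_
          have h2 : ‖g x - fC x‖ = dist (fC x) (g x) := by
            rw [dist_comm]; exact (dist_eq_norm _ _).symm
          calc ‖g x - fC x‖ = dist (fC x) (g x) := h2
            _ ≤ dist fC g := ContinuousMap.dist_apply_le_dist x
            _ ≤ ε := hgdist.le
      _ = ε := by simp
  obtain ⟨T, hTd, hTt⟩ :=
    ((Metric.tendsto_nhds.1 hgP ε hεpos).and (eventually_gt_atTop t₀)).exists
  have hTpos : 0 < T - t₀ := sub_pos.2 hTt
  set Ag : ℂ := (T - t₀)⁻¹ • ∫ t in t₀..T, g (flow ω φ t) with hAg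
  set Af : ℝ := (T - t₀)⁻¹ * ∫ t in t₀..T, f (flow ω φ t) with hAf
  have hIfg : ‖Ag - (Af : ℂ)‖ ≤ ε := by
    have hIg : IntervalIntegrable (fun t => g (flow ω φ t)) volume t₀ T :=
      (g.continuous.comp (continuous_flow ω φ)).intervalIntegrable _ _
    have hIf : IntervalIntegrable (fun t => ((f (flow ω φ t) : ℝ) : ℂ)) volume t₀ T :=
      (Complex.continuous_ofReal.comp (f.continuous.comp (continuous_flow ω φ))).intervalIntegrable _ _
    have hAf' : (Af : ℂ) = (T - t₀)⁻¹ • ∫ t in t₀..T, ((f (flow ω φ t) : ℝ) : ℂ) := by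
      rw [intervalIntegral.integral_ofReal, hAf]
      rw [Complex.real_smul]
      push_cast
      ring
    rw [hAg, hAf', ← smul_sub, ← intervalIntegral.integral_sub hIg hIf]
    rw [norm_smul, Real.norm_eq_abs, abs_of_pos (inv_pos.2 hTpos)]
    have hbound : ‖∫ t in t₀..T, (g (flow ω φ t) - ((f (flow ω φ t) : ℝ) : ℂ))‖
        ≤ ε * |T - t₀| := by
      refine intervalIntegral.norm_integral_le_of_norm_le_const fun x _ => ?_
      have h2 : ‖g (flow ω φ x) - ((f (flow ω φ x) : ℝ) : ℂ)‖
          = dist (fC (flow ω φ x)) (g (flow ω φ x)) := by rw [dist_comm]; exact (dist_eq_norm _ _).symm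
      rw [h2]
      exact (ContinuousMap.dist_apply_le_dist _).trans hgdist.le
    calc (T - t₀)⁻¹ * ‖∫ t in t₀..T, (g (flow ω φ t) - ((f (flow ω φ t) : ℝ) : ℂ))‖
        ≤ (T - t₀)⁻¹ * (ε * |T - t₀|) := by
          exact mul_le_mul_of_nonneg_left hbound (inv_pos.2 hTpos).le
      _ = ε := by
          rw [abs_of_pos hTpos]
          field_simp
  have hAfbig : ε ≤ Af := by
    have h4 : dist ((Af : ℝ) : ℂ) Ag ≤ ε := by
      rw [dist_comm, dist_eq_norm]; exact hIfg
    have h5 : dist Ag L < ε := hTd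
    have h3 : dist ((Af : ℝ) : ℂ) ((I0 : ℝ) : ℂ) < 3 * ε := by
      have t1 := dist_triangle ((Af : ℝ) : ℂ) Ag (((I0 : ℝ) : ℂ))
      have t2 := dist_triangle Ag L (((I0 : ℝ) : ℂ))
      linarith
    have h6 : |Af - I0| < 3 * ε := by
      rw [Complex.isometry_ofReal.dist_eq, Real.dist_eq] at h3
      exact h3
    rw [abs_lt] at h6
    have : I0 = 4 * ε := by rw [hε]; ring
    linarith [h6.1]
  have hJ : 0 < ∫ t in t₀..T, f (flow ω φ t) := by
    by_contra h
    push_neg at h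
    have : Af ≤ 0 := mul_nonpos_of_nonneg_of_nonpos (inv_pos.2 hTpos).le h
    linarith
  by_contra hcon
  push_neg at hcon
  have hzero : (∫ t in t₀..T, f (flow ω φ t)) = 0 := by
    rw [intervalIntegral.integral_congr (g := fun _ => (0:ℝ)) fun t ht => ?_]
    · exact intervalIntegral.integral_zero
    · rw [Set.uIcc_of_le hTt.le] at ht
      have hnotU : flow ω φ t ∉ U := hcon t ht.1
      exact hf0 hnotU
  linarith
end PhaseFlowAux
end

section
/- Let n : ℕ and let ω : Fin n → ℝ be linearly independent over ℚ, and let μ be the Haar probability measure on the n-torus (Fin n → AddCircle (1 : ℝ)) (the product of the normalized Haar measures on AddCircle 1). Then for every φ : Fin n → ℝ and every continuous f : (Fin n → AddCircle (1 : ℝ)) → ℝ, the time averages converge to the space average: Tendsto (fun T : ℝ => (1 / T) * ∫ t in Set.Ioc (0:ℝ) T, f (Φ t)) atTop (𝓝 (∫ x, f x ∂μ)), where Φ t = fun i => ((φ i + ω i * t : ℝ) : AddCircle 1). -/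
open Filter MeasureTheory
open scoped Real Topology

section Aux

open Complex Set

local notation "𝕋" => AddCircle (1 : ℝ)

/-- Probability measure on the circle. -/
lemma circle_prob : IsProbabilityMeasure (volume : Measure 𝕋) := ⟨by simp⟩

lemma torus_prob (n : ℕ) : IsProbabilityMeasure (volume : Measure (Fin n → 𝕋)) := by
  haveI := circle_prob
  rw [show (volume : Measure (Fin n → 𝕋)) = Measure.pi (fun _ => volume) from rfl]
  infer_instance

/-- Integral of a nontrivial character over the circle vanishes. -/
lemma integral_fourier_circle {m : ℤ} (hm : m ≠ 0) :
    ∫ x : 𝕋, fourier m x = 0 :=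
  integral_eq_zero_of_add_right_eq_neg (fourier_add_half_inv_index hm one_pos)

/-- The characters of the torus. -/
noncomputable def torusChar (n : ℕ) (k : Fin n → ℤ) : C((Fin n → 𝕋), ℂ) :=
  ⟨fun x => ∏ i, fourier (k i) (x i), by
    exact continuous_finset_prod _ fun i _ =>
      (map_continuous (fourier (k i))).comp (continuous_apply i)⟩

lemma torusChar_apply (n : ℕ) (k : Fin n → ℤ) (x : Fin n → 𝕋) :
    torusChar n k x = ∏ i, fourier (k i) (x i) := rfl

lemma torusChar_zero (n : ℕ) : torusChar n 0 = 1 := by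
  ext x
  simp [torusChar_apply, fourier_zero]

lemma torusChar_mul (n : ℕ) (k l : Fin n → ℤ) :
    torusChar n k * torusChar n l = torusChar n (k + l) := by
  ext x
  simp only [ContinuousMap.mul_apply, torusChar_apply, ← Finset.prod_mul_distrib]
  refine Finset.prod_congr rfl fun i _ => ?_
  rw [Pi.add_apply, fourier_add]

lemma torusChar_star (n : ℕ) (k : Fin n → ℤ) :
    star (torusChar n k) = torusChar n (-k) := by
  ext x
  simp only [ContinuousMap.star_apply, torusChar_apply, star_prod]
  refine Finset.prod_congr rfl fun i _ => ?_
  rw [Pi.neg_apply, fourier_neg]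
  rfl

/-- Integral of a nontrivial torus character vanishes. -/
lemma integral_torusChar (n : ℕ) (k : Fin n → ℤ) (hk : k ≠ 0) :
    ∫ x : Fin n → 𝕋, torusChar n k x = 0 := by
  have : ∫ x : Fin n → 𝕋, torusChar n k x = ∏ i, ∫ x : 𝕋, fourier (k i) x := by
    simp only [torusChar_apply]
    exact
      MeasureTheory.integral_fintype_prod_eq_prod
        (fun i (x : 𝕋) => (fourier (k i) x : ℂ))
  rw [this]
  obtain ⟨j, hj⟩ : ∃ j, k j ≠ 0 := by
    by_contra h
    push_neg at h
    exact hk (funext h)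
  exact Finset.prod_eq_zero (Finset.mem_univ j) (integral_fourier_circle hj)

/-- The span of torus characters, as a star subalgebra. -/
noncomputable def torusAlg (n : ℕ) : StarSubalgebra ℂ C((Fin n → 𝕋), ℂ) where
  toSubalgebra := (Submodule.span ℂ (Set.range (torusChar n))).toSubalgebra
    (by
      rw [← torusChar_zero n]
      exact Submodule.subset_span ⟨0, rfl⟩)
    (by
      intro x y hx hy
      induction hx using Submodule.span_induction generalizing y with
      | mem g hg =>
        obtain ⟨k, rfl⟩ := hg
        induction hy using Submodule.span_induction with
        | mem h hh =>
          obtain ⟨l, rfl⟩ := hh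
          rw [torusChar_mul]
          exact Submodule.subset_span ⟨k + l, rfl⟩
        | zero => simpa using Submodule.zero_mem _
        | add a b _ _ ha hb => rw [mul_add]; exact Submodule.add_mem _ ha hb
        | smul c a _ ha => rw [mul_smul_comm]; exact Submodule.smul_mem _ _ ha
      | zero => simpa using Submodule.zero_mem _
      | add a b _ _ ha hb => rw [add_mul]; exact Submodule.add_mem _ (ha _ hy) (hb _ hy)
      | smul c a _ ha => rw [smul_mul_assoc]; exact Submodule.smul_mem _ _ (ha _ hy))
  star_mem' := by
    intro x hx
    induction hx using Submodule.span_induction with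
    | mem g hg =>
      obtain ⟨k, rfl⟩ := hg
      rw [torusChar_star]
      exact Submodule.subset_span ⟨-k, rfl⟩
    | zero => simpa using Submodule.zero_mem _
    | add a b _ _ ha hb => rw [star_add]; exact Submodule.add_mem _ ha hb
    | smul c a _ ha => rw [star_smul]; exact Submodule.smul_mem _ _ ha

lemma torusAlg_separates (n : ℕ) : (torusAlg n).SeparatesPoints := by
  intro x y hxy
  obtain ⟨i, hi⟩ : ∃ i, x i ≠ y i := by
    by_contra h
    push_neg at h
    exact hxy (funext h)
  refine ⟨_, ⟨torusChar n (Pi.single i 1), Submodule.subset_span ⟨_, rfl⟩, rfl⟩, ?_⟩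
  dsimp only
  have hval : ∀ z : Fin n → 𝕋, torusChar n (Pi.single i 1) z = fourier 1 (z i) := by
    intro z
    rw [torusChar_apply]
    rw [Finset.prod_eq_single i (fun j _ hj => by simp [Pi.single_eq_of_ne hj, fourier_zero])
      (fun h => absurd (Finset.mem_univ i) h)]
    simp
  rw [hval, hval]
  simp only [fourier_one]
  intro h
  haveI : Fact ((0:ℝ) < 1) := ⟨one_pos⟩
  exact hi (AddCircle.injective_toCircle one_ne_zero (Subtype.coe_injective h))

lemma torusAlg_dense (n : ℕ) : (torusAlg n).topologicalClosure = ⊤ :=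
  ContinuousMap.starSubalgebra_topologicalClosure_eq_top_of_separatesPoints _
    (torusAlg_separates n)

end Aux

section Flow

open Complex Set

local notation "𝕋" => AddCircle (1 : ℝ)

variable {n : ℕ} (ω φ : Fin n → ℝ)

/-- The phase flow. -/
noncomputable def Φ (t : ℝ) : Fin n → 𝕋 := fun i => ((φ i + ω i * t : ℝ) : 𝕋)

lemma continuous_flow : Continuous fun t => Φ ω φ t := by
  refine continuous_pi fun i => ?_
  exact (AddCircle.continuous_mk' 1).comp (by continuity)

/-- The key pointwise computation for a character along the flow. -/
lemma torusChar_flow (k : Fin n → ℤ) (t : ℝ) :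
    torusChar n k (Φ ω φ t) =
      Complex.exp (2 * π * Complex.I * (∑ i, (k i : ℝ) * φ i)) *
        Complex.exp ((2 * π * (∑ i, (k i : ℝ) * ω i) * Complex.I) * t) := by
  rw [torusChar_apply]
  have h1 : ∀ i, (fourier (k i) ((Φ ω φ t) i) : ℂ) =
      Complex.exp (2 * (π:ℂ) * Complex.I * ((k i : ℂ) * (φ i : ℂ))
        + 2 * (π:ℂ) * ((k i : ℂ) * (ω i : ℂ)) * Complex.I * (t : ℂ)) := by
    intro i
    rw [show (Φ ω φ t) i = ((φ i + ω i * t : ℝ) : 𝕋) from rfl, fourier_coe_apply]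
    congr 1
    push_cast
    ring
  simp_rw [h1]
  rw [← Complex.exp_sum, ← Complex.exp_add]
  congr 1
  rw [Finset.sum_add_distrib, ← Finset.mul_sum]
  have h2 : ∑ i, 2 * (π:ℂ) * ((k i : ℂ) * (ω i : ℂ)) * Complex.I * (t : ℂ)
      = 2 * (π:ℂ) * (∑ i, (k i : ℂ) * (ω i : ℂ)) * Complex.I * (t : ℂ) := by
    calc ∑ i, 2 * (π:ℂ) * ((k i : ℂ) * (ω i : ℂ)) * Complex.I * (t : ℂ)
        = ∑ i, ((k i : ℂ) * (ω i : ℂ)) * (2 * (π:ℂ) * Complex.I * (t : ℂ)) :=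
          Finset.sum_congr rfl fun i _ => by ring
      _ = (∑ i, (k i : ℂ) * (ω i : ℂ)) * (2 * (π:ℂ) * Complex.I * (t : ℂ)) := by
          rw [Finset.sum_mul]
      _ = 2 * (π:ℂ) * (∑ i, (k i : ℂ) * (ω i : ℂ)) * Complex.I * (t : ℂ) := by ring
  rw [h2]
  push_cast
  ring

end Flow

section Average

open Complex Set

local notation "𝕋" => AddCircle (1 : ℝ)

variable {n : ℕ}

lemma freq_ne_zero {ω : Fin n → ℝ} (hω : LinearIndependent ℚ ω) {k : Fin n → ℤ}
    (hk : k ≠ 0) : (∑ i, (k i : ℝ) * ω i) ≠ 0 := by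
  intro h
  apply hk
  have h' : ∑ i, (k i : ℚ) • ω i = 0 := by
    rw [← h]
    refine Finset.sum_congr rfl fun i _ => ?_
    rw [Rat.smul_def]
    norm_cast
  have h2 := Fintype.linearIndependent_iff.mp hω (fun i => (k i : ℚ)) h'
  funext i
  rw [Pi.zero_apply]
  have h3 : (k i : ℚ) = 0 := h2 i
  exact_mod_cast h3

/-- Time average of a nontrivial character tends to zero. -/
lemma char_average_zero (ω φ : Fin n → ℝ) (hω : LinearIndependent ℚ ω) {k : Fin n → ℤ}
    (hk : k ≠ 0) :
    Tendsto (fun T : ℝ => (((1 : ℝ)/T : ℝ) : ℂ) *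
      ∫ t in Set.Ioc (0:ℝ) T, torusChar n k (Φ ω φ t)) atTop (𝓝 0) := by
  set a : ℝ := ∑ i, (k i : ℝ) * φ i with ha
  set c : ℝ := ∑ i, (k i : ℝ) * ω i with hc
  have hc0 : c ≠ 0 := freq_ne_zero hω hk
  set d : ℂ := 2 * (π:ℂ) * (c:ℂ) * Complex.I with hd
  have hd0 : d ≠ 0 := by
    refine mul_ne_zero (mul_ne_zero (mul_ne_zero two_ne_zero ?_) ?_) Complex.I_ne_zero
    · exact_mod_cast Complex.ofReal_ne_zero.mpr Real.pi_ne_zero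
    · exact Complex.ofReal_ne_zero.mpr hc0
  have hflow : ∀ t : ℝ, torusChar n k (Φ ω φ t)
      = Complex.exp (2 * (π:ℂ) * Complex.I * (a:ℂ)) * Complex.exp (d * t) := by
    intro t
    rw [torusChar_flow ω φ k t, ← ha, ← hc, hd]
  have hbound : ∀ T : ℝ, 1 ≤ T →
      ‖(((1:ℝ)/T : ℝ) : ℂ) * ∫ t in Set.Ioc (0:ℝ) T, torusChar n k (Φ ω φ t)‖
        ≤ (2/‖d‖) * (1/T) := by
    intro T hT
    have hT0 : (0:ℝ) < T := lt_of_lt_of_le one_pos hT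
    have hint : ∫ t in Set.Ioc (0:ℝ) T, torusChar n k (Φ ω φ t)
        = Complex.exp (2 * (π:ℂ) * Complex.I * (a:ℂ)) *
          ((Complex.exp (d * T) - 1) / d) := by
      simp_rw [hflow]
      rw [MeasureTheory.integral_const_mul, ← intervalIntegral.integral_of_le hT0.le,
        integral_exp_mul_complex hd0]
      norm_num
    rw [hint]
    have hexp1 : ‖Complex.exp (2 * (π:ℂ) * Complex.I * (a:ℂ))‖ = 1 := by
      rw [show (2 * (π:ℂ) * Complex.I * (a:ℂ)) = ((2 * π * a : ℝ) : ℂ) * Complex.I from by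
        push_cast; ring]
      rw [Complex.norm_exp_ofReal_mul_I]
    have hexp2 : ‖Complex.exp (d * T) - 1‖ ≤ 2 := by
      refine (norm_sub_le _ _).trans ?_
      have : ‖Complex.exp (d * T)‖ = 1 := by
        rw [show d * (T:ℂ) = ((2 * π * c * T : ℝ) : ℂ) * Complex.I from by
          rw [hd]; push_cast; ring]
        rw [Complex.norm_exp_ofReal_mul_I]
      rw [this, norm_one]
      norm_num
    rw [norm_mul, norm_mul, norm_div, hexp1, one_mul]
    have h1T : ‖(((1:ℝ)/T : ℝ) : ℂ)‖ = 1/T := by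
      rw [Complex.norm_real, Real.norm_eq_abs, abs_of_pos (by positivity)]
    rw [h1T]
    rw [show (2/‖d‖) * (1/T) = (1/T) * (2/‖d‖) from by ring]
    gcongr
  refine squeeze_zero_norm' (a := fun T : ℝ => (2/‖d‖) * (1/T)) ?_ ?_
  · filter_upwards [eventually_ge_atTop (1:ℝ)] with T hT using hbound T hT
  · have h0 : Tendsto (fun T : ℝ => (1:ℝ)/T) atTop (𝓝 0) := by
      simpa [one_div] using tendsto_inv_atTop_zero (𝕜 := ℝ)
    simpa using h0.const_mul (2/‖d‖)

end Average

section Main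

open Complex Set

local notation "𝕋" => AddCircle (1 : ℝ)

variable {n : ℕ}

lemma complex_average (ω : Fin n → ℝ) (hω : LinearIndependent ℚ ω) (φ : Fin n → ℝ)
    (g : C((Fin n → 𝕋), ℂ)) :
    Tendsto (fun T : ℝ => (((1:ℝ)/T : ℝ) : ℂ) * ∫ t in Set.Ioc (0:ℝ) T, g (Φ ω φ t)) atTop
      (𝓝 (∫ x : Fin n → 𝕋, g x)) := by
  haveI := torus_prob n
  have hintT : ∀ (h : C((Fin n → 𝕋), ℂ)) (T : ℝ),
      IntegrableOn (fun t => h (Φ ω φ t)) (Set.Ioc (0:ℝ) T) :=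
    fun h T => (h.continuous.comp (continuous_flow ω φ)).integrableOn_Ioc
  have hintX : ∀ (h : C((Fin n → 𝕋), ℂ)), Integrable (fun x => h x) volume :=
    fun h => h.continuous.integrable_of_hasCompactSupport
      (HasCompactSupport.of_compactSpace _)
  have hspan : ∀ h ∈ Submodule.span ℂ (Set.range (torusChar n)),
      Tendsto (fun T : ℝ => (((1:ℝ)/T : ℝ) : ℂ) * ∫ t in Set.Ioc (0:ℝ) T, h (Φ ω φ t)) atTop
        (𝓝 (∫ x : Fin n → 𝕋, h x)) := by
    intro h hh
    induction hh using Submodule.span_induction with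
    | mem u hu =>
      obtain ⟨k, rfl⟩ := hu
      by_cases hk : k = 0
      · subst hk
        rw [torusChar_zero]
        have hlim : ∫ x : Fin n → 𝕋, (1 : C((Fin n → 𝕋), ℂ)) x = 1 := by
          simp
        rw [hlim]
        apply Tendsto.congr' _ tendsto_const_nhds
        filter_upwards [eventually_ge_atTop (1:ℝ)] with T hT
        have hT0 : (0:ℝ) < T := lt_of_lt_of_le one_pos hT
        simp only [ContinuousMap.one_apply]
        rw [setIntegral_const, Real.volume_real_Ioc_of_le hT0.le, sub_zero,
          Complex.real_smul, mul_one]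
        push_cast
        rw [one_div, inv_mul_cancel₀ (Complex.ofReal_ne_zero.mpr hT0.ne')]
      · rw [integral_torusChar n k hk]
        exact char_average_zero ω φ hω hk
    | zero =>
      simp only [ContinuousMap.zero_apply, integral_zero, mul_zero]
      exact tendsto_const_nhds
    | add u v hu hv ihu ihv =>
      have keyX : ∫ x : Fin n → 𝕋, (u + v) x = (∫ x : Fin n → 𝕋, u x) + ∫ x : Fin n → 𝕋, v x := by
        simp only [ContinuousMap.add_apply]
        exact integral_add (hintX u) (hintX v)
      rw [keyX]
      refine (ihu.add ihv).congr fun T => ?_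
      simp only [ContinuousMap.add_apply]
      rw [integral_add (hintT u T) (hintT v T), mul_add]
    | smul c u hu ihu =>
      have keyX : ∫ x : Fin n → 𝕋, (c • u) x = c * ∫ x : Fin n → 𝕋, u x := by
        simp only [ContinuousMap.smul_apply, smul_eq_mul]
        exact integral_const_mul c _
      rw [keyX]
      refine ((ihu.const_mul c)).congr fun T => ?_
      simp only [ContinuousMap.smul_apply, smul_eq_mul]
      rw [integral_const_mul]
      ring
  -- density argument
  rw [Metric.tendsto_nhds]
  intro ε hε
  have hgmem : g ∈ (torusAlg n).topologicalClosure := by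
    rw [torusAlg_dense n]; trivial
  have hgclos : g ∈ closure ((torusAlg n : Set C((Fin n → 𝕋), ℂ))) := hgmem
  obtain ⟨h, hhmem, hgh⟩ := Metric.mem_closure_iff.mp hgclos (ε/3) (by positivity)
  have hhspan : h ∈ Submodule.span ℂ (Set.range (torusChar n)) := hhmem
  have hPh := Metric.tendsto_nhds.mp (hspan h hhspan) (ε/3) (by positivity)
  filter_upwards [hPh, eventually_ge_atTop (1:ℝ)] with T hTc hT1
  have hT0 : (0:ℝ) < T := lt_of_lt_of_le one_pos hT1
  have key1 : dist ((((1:ℝ)/T : ℝ) : ℂ) * ∫ t in Set.Ioc (0:ℝ) T, g (Φ ω φ t))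
      ((((1:ℝ)/T : ℝ) : ℂ) * ∫ t in Set.Ioc (0:ℝ) T, h (Φ ω φ t)) ≤ dist g h := by
    rw [dist_eq_norm, ← mul_sub, ← integral_sub (hintT g T) (hintT h T), norm_mul]
    have hb : ‖∫ t in Set.Ioc (0:ℝ) T, (g (Φ ω φ t) - h (Φ ω φ t))‖
        ≤ dist g h * (volume (Set.Ioc (0:ℝ) T)).toReal := by
      refine norm_setIntegral_le_of_norm_le_const ?_ ?_
      · rw [Real.volume_Ioc]; exact ENNReal.ofReal_lt_top
      · intro t _
        rw [← dist_eq_norm]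
        exact ContinuousMap.dist_apply_le_dist _
    calc ‖((((1:ℝ)/T : ℝ) : ℂ))‖ * ‖∫ t in Set.Ioc (0:ℝ) T, (g (Φ ω φ t) - h (Φ ω φ t))‖
        ≤ ‖((((1:ℝ)/T : ℝ) : ℂ))‖ * (dist g h * (volume (Set.Ioc (0:ℝ) T)).toReal) := by
          gcongr
      _ = dist g h := by
          rw [Complex.norm_real, Real.norm_eq_abs, abs_of_pos (by positivity),
            Real.volume_Ioc, sub_zero, ENNReal.toReal_ofReal hT0.le]
          field_simp
  have key2 : dist (∫ x : Fin n → 𝕋, h x) (∫ x : Fin n → 𝕋, g x) ≤ dist g h := by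
    rw [dist_eq_norm, ← integral_sub (hintX h) (hintX g)]
    have := norm_integral_le_of_norm_le_const (μ := (volume : Measure (Fin n → 𝕋)))
      (f := fun x => h x - g x) (C := dist g h)
      (Filter.Eventually.of_forall fun x => by
        rw [← dist_eq_norm, dist_comm]
        exact ContinuousMap.dist_apply_le_dist x)
    simpa [measure_univ] using this
  calc dist ((((1:ℝ)/T : ℝ) : ℂ) * ∫ t in Set.Ioc (0:ℝ) T, g (Φ ω φ t))
        (∫ x : Fin n → 𝕋, g x)
      ≤ dist ((((1:ℝ)/T : ℝ) : ℂ) * ∫ t in Set.Ioc (0:ℝ) T, g (Φ ω φ t))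
          ((((1:ℝ)/T : ℝ) : ℂ) * ∫ t in Set.Ioc (0:ℝ) T, h (Φ ω φ t))
        + dist ((((1:ℝ)/T : ℝ) : ℂ) * ∫ t in Set.Ioc (0:ℝ) T, h (Φ ω φ t))
            (∫ x : Fin n → 𝕋, h x)
        + dist (∫ x : Fin n → 𝕋, h x) (∫ x : Fin n → 𝕋, g x) := dist_triangle4 _ _ _ _
    _ < ε/3 + ε/3 + ε/3 := by
        exact add_lt_add (add_lt_add (key1.trans_lt hgh) hTc) (key2.trans_lt hgh)
    _ = ε := by ring

end Main

/-- Weyl equidistribution of the linear flow on the `n`-torus: with incommensurable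
frequencies, time averages of any continuous observable along the phase flow converge to its
space average with respect to the Haar probability measure (the product of the normalized
Haar measures on `AddCircle 1`, i.e. `volume`). -/
theorem phase_flow_equidistributed (n : ℕ) (ω : Fin n → ℝ)
    (hω : LinearIndependent ℚ ω) (φ : Fin n → ℝ)
    (f : (Fin n → AddCircle (1 : ℝ)) → ℝ) (hf : Continuous f) :
    Tendsto
      (fun T : ℝ => (1 / T) *
        ∫ t in Set.Ioc (0 : ℝ) T, f (fun i => ((φ i + ω i * t : ℝ) : AddCircle (1 : ℝ))))
      atTop
      (nhds (∫ x : Fin n → AddCircle (1 : ℝ), f x)) := by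
  have hcont : Continuous fun x : Fin n → AddCircle (1:ℝ) => (f x : ℂ) :=
    Complex.continuous_ofReal.comp hf
  have hcplx := complex_average ω hω φ ⟨_, hcont⟩
  simp only [ContinuousMap.coe_mk] at hcplx
  have hre := (Complex.continuous_re.tendsto _).comp hcplx
  have heq : ((fun z : ℂ => z.re) ∘ fun T : ℝ =>
        (((1:ℝ)/T : ℝ):ℂ) * ∫ t in Set.Ioc (0:ℝ) T, ((f (Φ ω φ t)) : ℂ))
      = fun T : ℝ => (1/T) * ∫ t in Set.Ioc (0:ℝ) T, f (Φ ω φ t) := by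
    funext T
    simp only [Function.comp_apply]
    rw [show ∫ t in Set.Ioc (0:ℝ) T, ((f (Φ ω φ t)) : ℂ)
        = ((∫ t in Set.Ioc (0:ℝ) T, f (Φ ω φ t) : ℝ) : ℂ) from integral_ofReal,
      ← Complex.ofReal_mul, Complex.ofReal_re]
  rw [heq] at hre
  rw [show (∫ x : Fin n → AddCircle (1:ℝ), ((f x : ℂ))).re
      = ∫ x : Fin n → AddCircle (1:ℝ), f x from by
    rw [show (∫ x : Fin n → AddCircle (1:ℝ), ((f x : ℂ)))
        = ((∫ x : Fin n → AddCircle (1:ℝ), f x : ℝ) : ℂ) from integral_ofReal,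
      Complex.ofReal_re]] at hre
  exact hre
end

section
/- Let n : ℕ, and for each i : Fin n let p i = h i + l i with h i > 0 and l i > 0, with offsets φ : Fin n → ℝ, and let H i t ↔ ∃ k : ℤ, 0 ≤ t - φ i - k * p i ∧ t - φ i - k * p i < h i. Assume the frequencies fun i => (p i)⁻¹ are linearly independent over ℚ, and assume h i > l j for all i ≠ j. Then for every r : Fin n and every t₀ : ℝ there exists a ≥ t₀ such that: (i) a is the start of a low phase of oscillator r, i.e., ∃ k : ℤ, a = φ r + h r + k * p r, so that ¬ H r s for all s ∈ Set.Ico a (a + l r); and (ii) for every i ≠ r and every s ∈ Set.Icc a (a + l r), H i s holds. -/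
/-- Oscillatory inhibition waveform: inhibition of oscillator `i` (period `p i`, high-phase
duration `h i`, offset `φ i`) is on at time `t` iff `t` lies in
`[φ i + k * p i, φ i + k * p i + h i)` for some `k : ℤ`. -/
def inhibOn (n : ℕ) (φ p h : Fin n → ℝ) (i : Fin n) (t : ℝ) : Prop :=
  ∃ k : ℤ, 0 ≤ t - φ i - (k : ℝ) * p i ∧ t - φ i - (k : ℝ) * p i < h i


noncomputable section
open MeasureTheory Set Function Submodule Complex

namespace KroneckerAux

variable {ι : Type*} [Fintype ι] {T : ι → ℝ}

/-- Product character on a product of additive circles. -/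
def charF (T : ι → ℝ) (ξ : ι → ℤ) : C((∀ i, AddCircle (T i)), ℂ) :=
  ∏ i, (fourier (ξ i)).comp ⟨fun x => x i, continuous_apply i⟩

lemma charF_apply (ξ : ι → ℤ) (x : ∀ i, AddCircle (T i)) :
    charF T ξ x = ∏ i, fourier (ξ i) (x i) := by
  simp [charF]

lemma fourier_add_arg {S : ℝ} (n : ℤ) (x y : AddCircle S) :
    fourier n (x + y) = fourier n x * fourier n y := by
  simp only [fourier_apply, smul_add, AddCircle.toCircle_add, Circle.coe_mul]

lemma charF_zero (x : ∀ i, AddCircle (T i)) : charF T 0 x = 1 := by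
  simp [charF_apply, fourier_zero]

lemma charF_add_arg (ξ : ι → ℤ) (x y : ∀ i, AddCircle (T i)) :
    charF T ξ (x + y) = charF T ξ x * charF T ξ y := by
  simp only [charF_apply, Pi.add_apply, fourier_add_arg, Finset.prod_mul_distrib]

lemma charF_nsmul (ξ : ι → ℤ) (k : ℕ) (v : ∀ i, AddCircle (T i)) :
    charF T ξ (k • v) = charF T ξ v ^ k := by
  induction k with
  | zero => simp [charF_apply, fourier_eval_zero]
  | succ m ih => rw [succ_nsmul, charF_add_arg, ih, pow_succ]

lemma norm_charF (ξ : ι → ℤ) (x : ∀ i, AddCircle (T i)) : ‖charF T ξ x‖ = 1 := by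
  rw [charF_apply]
  rw [norm_prod]
  simp [fourier_apply, Circle.norm_coe]

lemma charF_mul (ξ η : ι → ℤ) :
    charF T ξ * charF T η = charF T (ξ + η) := by
  ext x
  simp only [ContinuousMap.mul_apply, charF_apply, ← Finset.prod_mul_distrib, Pi.add_apply,
    fourier_add]

lemma charF_star (ξ : ι → ℤ) : star (charF T ξ) = charF T (-ξ) := by
  ext x
  simp only [ContinuousMap.star_apply, charF_apply, star_prod, Pi.neg_apply, fourier_neg,
    RCLike.star_def, map_prod]

end KroneckerAux

set_option synthInstance.maxHeartbeats 1000000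
set_option maxHeartbeats 1000000
set_option linter.unusedSectionVars false

namespace KroneckerAux

variable {ι : Type*} [Fintype ι] [DecidableEq ι] {T : ι → ℝ}

section SW

variable [hT : ∀ i, Fact (0 < T i)]

/-- The star subalgebra generated by product characters. -/
def charSubalgebra (T : ι → ℝ) : StarSubalgebra ℂ C((∀ i, AddCircle (T i)), ℂ) where
  toSubalgebra := Algebra.adjoin ℂ (range (charF T))
  star_mem' := by
    show Algebra.adjoin ℂ (range (charF T)) ≤ star (Algebra.adjoin ℂ (range (charF T)))
    refine Algebra.adjoin_le ?_
    rintro - ⟨ξ, rfl⟩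
    show charF T ξ ∈ star (Algebra.adjoin ℂ (range (charF T)))
    rw [Subalgebra.mem_star_iff]
    exact Algebra.subset_adjoin ⟨-ξ, (charF_star ξ).symm⟩

lemma charSubalgebra_coe :
    Subalgebra.toSubmodule (charSubalgebra T).toSubalgebra = span ℂ (range (charF T)) := by
  apply Algebra.adjoin_eq_span_of_subset
  refine Subset.trans ?_ Submodule.subset_span
  intro x hx
  refine Submonoid.closure_induction (fun _ => id) ⟨0, ?_⟩ ?_ hx
  · ext1 z; exact charF_zero z
  · rintro - - - - ⟨m, rfl⟩ ⟨k, rfl⟩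
    exact ⟨m + k, (charF_mul m k).symm⟩

lemma charSubalgebra_separatesPoints : (charSubalgebra T).SeparatesPoints := by
  intro x y hxy
  obtain ⟨i, hi⟩ : ∃ i, x i ≠ y i := by
    by_contra hc
    push_neg at hc
    exact hxy (funext hc)
  refine ⟨_, ⟨charF T ((Pi.single i 1 : ι → ℤ)), Algebra.subset_adjoin ⟨_, rfl⟩, rfl⟩, ?_⟩
  dsimp only
  rw [charF_apply, charF_apply]
  have key : ∀ z : ∀ j, AddCircle (T j),
      ∏ j, fourier ((Pi.single i 1 : ι → ℤ) j) (z j) = AddCircle.toCircle (z i) := by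
    intro z
    rw [Finset.prod_eq_single i]
    · simp [fourier_one]
    · intro j _ hj
      simp [Pi.single_eq_of_ne hj, fourier_zero]
    · simp
  rw [key, key]
  exact fun hc => hi (AddCircle.injective_toCircle (hT i).out.ne' (Subtype.coe_injective hc))

lemma charSubalgebra_closure_eq_top : (charSubalgebra T).topologicalClosure = ⊤ :=
  ContinuousMap.starSubalgebra_topologicalClosure_eq_top_of_separatesPoints _
    charSubalgebra_separatesPoints

lemma span_charF_closure_eq_top :
    (span ℂ (range (charF T))).topologicalClosure = ⊤ := by
  rw [← charSubalgebra_coe]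
  exact congr_arg (Subalgebra.toSubmodule <| StarSubalgebra.toSubalgebra ·)
    charSubalgebra_closure_eq_top

/-- The product Haar probability measure. -/
def torusMeasure (T : ι → ℝ) [∀ i, Fact (0 < T i)] : Measure (∀ i, AddCircle (T i)) :=
  Measure.pi fun _ => AddCircle.haarAddCircle

instance : IsProbabilityMeasure (torusMeasure T) := by
  unfold torusMeasure; infer_instance

instance : (torusMeasure T).IsAddRightInvariant := by
  unfold torusMeasure; infer_instance

instance : (torusMeasure T).IsOpenPosMeasure := by
  unfold torusMeasure; infer_instance

lemma integral_charF (ξ : ι → ℤ) (hξ : ξ ≠ 0) :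
    ∫ x, charF T ξ x ∂(torusMeasure T) = 0 := by
  obtain ⟨i₀, hi₀⟩ : ∃ i, ξ i ≠ 0 := by
    by_contra hc; push_neg at hc; exact hξ (funext hc)
  set c : ∀ i, AddCircle (T i) :=
    Pi.single i₀ ((T i₀ / 2 / (ξ i₀) : ℝ) : AddCircle (T i₀)) with hcdef
  have hval : charF T ξ c = -1 := by
    rw [charF_apply, Finset.prod_eq_single i₀]
    · have h2 := fourier_add_half_inv_index (T := T i₀) hi₀ (hT i₀).out (0 : AddCircle (T i₀))
      rw [zero_add] at h2
      have h0 : c i₀ = ((T i₀ / 2 / (ξ i₀) : ℝ) : AddCircle (T i₀)) := Pi.single_eq_same _ _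
      rw [h0, h2, fourier_eval_zero]
    · intro j _ hj
      have h0 : c j = 0 := Pi.single_eq_of_ne hj _
      rw [h0, fourier_eval_zero]
    · simp
  have hinv := integral_add_right_eq_self (μ := torusMeasure T) (fun x => charF T ξ x) c
  simp_rw [charF_add_arg, hval, mul_neg_one] at hinv
  rw [integral_neg] at hinv
  have h2 : (∫ x, charF T ξ x ∂(torusMeasure T)) + (∫ x, charF T ξ x ∂(torusMeasure T)) = 0 := by
    nth_rewrite 1 [← hinv]; ring
  exact add_self_eq_zero.mp h2

end SW

end KroneckerAux

namespace KroneckerAux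

variable {ι : Type*} [Fintype ι] [DecidableEq ι] {T : ι → ℝ}

section Weyl

variable [hT : ∀ i, Fact (0 < T i)]

/-- Birkhoff-type average of `g` along the forward orbit of `0` under translation by `v`. -/
def avg (g : C((∀ i, AddCircle (T i)), ℂ)) (v : ∀ i, AddCircle (T i)) (N : ℕ) : ℂ :=
  (N : ℂ)⁻¹ * ∑ k ∈ Finset.range N, g (k • v)

lemma integrable_cm (g : C((∀ i, AddCircle (T i)), ℂ)) : Integrable g (torusMeasure T) :=
  g.continuous.integrable_of_hasCompactSupport (HasCompactSupport.of_compactSpace _)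

lemma tendsto_avg_charF (v : ∀ i, AddCircle (T i))
    (hv : ∀ ξ : ι → ℤ, ξ ≠ 0 → charF T ξ v ≠ 1) (ξ : ι → ℤ) :
    Filter.Tendsto (avg (charF T ξ) v) Filter.atTop
      (nhds (∫ x, charF T ξ x ∂(torusMeasure T))) := by
  rcases eq_or_ne ξ 0 with rfl | hξ
  · have hint : (∫ x, charF T (0 : ι → ℤ) x ∂(torusMeasure T)) = 1 := by
      simp_rw [charF_zero]
      simp
    rw [hint]
    have : ∀ N : ℕ, 1 ≤ N → avg (charF T (0 : ι → ℤ)) v N = 1 := by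
      intro N hN
      simp only [avg, charF_zero, Finset.sum_const, Finset.card_range, nsmul_eq_mul, mul_one]
      rw [inv_mul_cancel₀]
      exact_mod_cast Nat.one_le_iff_ne_zero.mp hN
    refine Filter.Tendsto.congr' ?_ tendsto_const_nhds
    filter_upwards [Filter.eventually_ge_atTop 1] with N hN
    exact (this N hN).symm
  · rw [integral_charF ξ hξ]
    set lam : ℂ := charF T ξ v with hlam
    have hlam1 : lam ≠ 1 := hv ξ hξ
    have hnorm : ∀ N, ‖avg (charF T ξ) v N‖ ≤ (2 / ‖lam - 1‖) / N := by
      intro N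
      have hsum : ∑ k ∈ Finset.range N, charF T ξ (k • v) = (lam ^ N - 1) / (lam - 1) := by
        simp_rw [charF_nsmul, ← hlam]
        exact geom_sum_eq hlam1 N
      rw [avg, hsum]
      rw [norm_mul, norm_inv, norm_div]
      have h1 : ‖lam ^ N - 1‖ ≤ 2 := by
        have := norm_sub_le (lam ^ N) 1
        have hl : ‖lam‖ = 1 := norm_charF ξ v
        rw [norm_pow, hl, one_pow, norm_one] at this
        linarith
      have h2 : (0:ℝ) < ‖lam - 1‖ := by
        rw [norm_pos_iff]
        exact sub_ne_zero.mpr hlam1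
      rw [Complex.norm_natCast, inv_mul_eq_div, div_div]
      rw [div_div]
      gcongr
    have hto : Filter.Tendsto (fun N : ℕ => (2 / ‖lam - 1‖) / N) Filter.atTop (nhds 0) :=
      tendsto_const_div_atTop_nhds_zero_nat _
    refine squeeze_zero_norm (fun N => hnorm N) hto

lemma tendsto_avg (v : ∀ i, AddCircle (T i))
    (hv : ∀ ξ : ι → ℤ, ξ ≠ 0 → charF T ξ v ≠ 1) (g : C((∀ i, AddCircle (T i)), ℂ)) :
    Filter.Tendsto (avg g v) Filter.atTop (nhds (∫ x, g x ∂(torusMeasure T))) := by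
  -- first, the span of characters
  have hspan : ∀ P ∈ span ℂ (range (charF T)),
      Filter.Tendsto (avg P v) Filter.atTop (nhds (∫ x, P x ∂(torusMeasure T))) := by
    intro P hP
    induction hP using Submodule.span_induction with
    | mem x hx =>
      obtain ⟨ξ, rfl⟩ := hx
      exact tendsto_avg_charF v hv ξ
    | zero =>
      have : avg (0 : C((∀ i, AddCircle (T i)), ℂ)) v = fun _ => 0 := by
        funext N; simp [avg]
      rw [this]
      simpa using tendsto_const_nhds
    | add x y hx hy ihx ihy =>
      have : avg (x + y) v = fun N => avg x v N + avg y v N := by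
        funext N; simp [avg, Finset.sum_add_distrib, mul_add]
      rw [this]
      have hint : (∫ z, (x + y) z ∂(torusMeasure T))
          = (∫ z, x z ∂(torusMeasure T)) + ∫ z, y z ∂(torusMeasure T) := by
        simp only [ContinuousMap.add_apply]
        exact integral_add (integrable_cm x) (integrable_cm y)
      rw [hint]
      exact ihx.add ihy
    | smul c x hx ihx =>
      have : avg (c • x) v = fun N => c * avg x v N := by
        funext N
        simp only [avg, ContinuousMap.coe_smul, Pi.smul_apply, smul_eq_mul]
        rw [← Finset.mul_sum]
        ring
      rw [this]
      have hint : (∫ z, (c • x) z ∂(torusMeasure T)) = c * ∫ z, x z ∂(torusMeasure T) := by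
        simp only [ContinuousMap.coe_smul, Pi.smul_apply]
        rw [integral_smul]
        simp
      rw [hint]
      exact ihx.const_mul c
  -- now extend by density
  rw [Metric.tendsto_atTop]
  intro ε hε
  have hdense : g ∈ closure ((span ℂ (range (charF T)) : Submodule ℂ _) : Set _) := by
    have := span_charF_closure_eq_top (T := T)
    have hg : g ∈ (span ℂ (range (charF T))).topologicalClosure := by
      rw [this]; trivial
    rw [← Submodule.topologicalClosure_coe]; exact hg
  obtain ⟨P, hPmem, hPdist⟩ := Metric.mem_closure_iff.mp hdense (ε / 3) (by linarith)
  have hgP : ‖g - P‖ < ε / 3 := by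
    rw [← dist_eq_norm]; exact hPdist
  obtain ⟨N₀, hN₀⟩ := Metric.tendsto_atTop.mp (hspan P hPmem) (ε / 3) (by linarith)
  refine ⟨max N₀ 1, fun N hN => ?_⟩
  have hN1 : 1 ≤ N := le_trans (le_max_right _ _) hN
  have hNN₀ : N₀ ≤ N := le_trans (le_max_left _ _) hN
  have hNpos : (0:ℝ) < N := by exact_mod_cast hN1
  -- bound 1 : averages
  have hb1 : ‖avg g v N - avg P v N‖ ≤ ε / 3 := by
    have : avg g v N - avg P v N
        = (N : ℂ)⁻¹ * ∑ k ∈ Finset.range N, (g - P) ((k : ℕ) • v) := by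
      simp only [avg, ContinuousMap.sub_apply, Finset.sum_sub_distrib, mul_sub]
    rw [this, norm_mul, norm_inv, Complex.norm_natCast]
    have hsumb : ‖∑ k ∈ Finset.range N, (g - P) ((k : ℕ) • v)‖ ≤ N * (ε / 3) := by
      refine le_trans (norm_sum_le _ _) ?_
      have : ∀ k ∈ Finset.range N, ‖(g - P) ((k : ℕ) • v)‖ ≤ ε / 3 :=
        fun k _ => le_of_lt (lt_of_le_of_lt (ContinuousMap.norm_coe_le_norm (g - P) _) hgP)
      calc ∑ k ∈ Finset.range N, ‖(g - P) ((k : ℕ) • v)‖ ≤ ∑ _k ∈ Finset.range N, (ε / 3) :=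
            Finset.sum_le_sum this
        _ = N * (ε / 3) := by rw [Finset.sum_const, Finset.card_range, nsmul_eq_mul]
    calc (N:ℝ)⁻¹ * ‖∑ k ∈ Finset.range N, (g - P) ((k : ℕ) • v)‖
        ≤ (N:ℝ)⁻¹ * (N * (ε / 3)) := by
          apply mul_le_mul_of_nonneg_left hsumb (by positivity)
      _ = ε / 3 := by field_simp
  -- bound 2 : integrals
  have hb2 : ‖(∫ x, g x ∂(torusMeasure T)) - ∫ x, P x ∂(torusMeasure T)‖ ≤ ε / 3 := by
    rw [← integral_sub (integrable_cm g) (integrable_cm P)]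
    have : ∀ x, ‖g x - P x‖ ≤ ε / 3 :=
      fun x => le_of_lt (lt_of_le_of_lt (ContinuousMap.norm_coe_le_norm (g - P) x) hgP)
    calc ‖∫ x, (g x - P x) ∂(torusMeasure T)‖
        ≤ ε / 3 * ((torusMeasure T) Set.univ).toReal :=
          norm_integral_le_of_norm_le_const (Filter.Eventually.of_forall this)
      _ = ε / 3 := by simp
  have hb3 : dist (avg P v N) (∫ x, P x ∂(torusMeasure T)) < ε / 3 := hN₀ N hNN₀
  have : dist (avg g v N) (∫ x, g x ∂(torusMeasure T))
      ≤ ‖avg g v N - avg P v N‖ + dist (avg P v N) (∫ x, P x ∂(torusMeasure T))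
        + ‖(∫ x, P x ∂(torusMeasure T)) - ∫ x, g x ∂(torusMeasure T)‖ := by
    rw [dist_eq_norm, dist_eq_norm]
    have := norm_add₃_le (a := avg g v N - avg P v N)
      (b := avg P v N - ∫ x, P x ∂(torusMeasure T))
      (c := (∫ x, P x ∂(torusMeasure T)) - ∫ x, g x ∂(torusMeasure T))
    simpa using this
  have hb2' : ‖(∫ x, P x ∂(torusMeasure T)) - ∫ x, g x ∂(torusMeasure T)‖ ≤ ε / 3 := by
    rw [norm_sub_rev]; exact hb2
  linarith

/-- Kronecker--Weyl: the forward orbit of `0` under an irrational translation is dense. -/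
theorem dense_forward_orbit (v : ∀ i, AddCircle (T i))
    (hv : ∀ ξ : ι → ℤ, ξ ≠ 0 → charF T ξ v ≠ 1) :
    Dense (range fun k : ℕ => k • v) := by
  rw [dense_iff_closure_eq]
  by_contra hne
  obtain ⟨x₀, hx₀⟩ : ∃ x₀, x₀ ∉ closure (range fun k : ℕ => k • v) := by
    exact (Set.ne_univ_iff_exists_notMem _).mp hne
  obtain ⟨f, hf0, hf1, hfb⟩ := exists_continuous_zero_one_of_isClosed
    isClosed_closure (isClosed_singleton (x := x₀))
    (Set.disjoint_singleton_right.mpr hx₀)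
  set g : C((∀ i, AddCircle (T i)), ℂ) :=
    ⟨fun x => (f x : ℂ), Complex.continuous_ofReal.comp f.continuous⟩ with hg
  have havg0 : ∀ N, avg g v N = 0 := by
    intro N
    have : ∀ k ∈ Finset.range N, g ((k : ℕ) • v) = 0 := by
      intro k _
      have hmem : (k : ℕ) • v ∈ closure (range fun k : ℕ => k • v) :=
        subset_closure ⟨k, rfl⟩
      have : f ((k : ℕ) • v) = 0 := hf0 hmem
      simp only [g, ContinuousMap.coe_mk]
      rw [this, Complex.ofReal_zero]
    rw [avg, Finset.sum_eq_zero this, mul_zero]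
  have hlim := tendsto_avg v hv g
  have hint0 : (∫ x, g x ∂(torusMeasure T)) = 0 := by
    have h1 : Filter.Tendsto (avg g v) Filter.atTop (nhds 0) := by
      have he : avg g v = fun _ => (0:ℂ) := funext havg0
      rw [he]
      exact tendsto_const_nhds
    exact (tendsto_nhds_unique hlim h1)
  have hfint : (∫ x, f x ∂(torusMeasure T)) = 0 := by
    have : (∫ x, g x ∂(torusMeasure T)) = ((∫ x, f x ∂(torusMeasure T) : ℝ) : ℂ) :=
      integral_ofReal
    rw [this] at hint0
    exact_mod_cast hint0
  have hpos : 0 < ∫ x, f x ∂(torusMeasure T) := by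
    rw [integral_pos_iff_support_of_nonneg (fun x => (hfb x).1)
      (f.continuous.integrable_of_hasCompactSupport (HasCompactSupport.of_compactSpace _))]
    have hopen : IsOpen (Function.support f) := by
      have : Function.support f = f ⁻¹' ({0}ᶜ) := by
        ext x; simp [Function.support]
      rw [this]
      exact (isOpen_compl_singleton).preimage f.continuous
    refine hopen.measure_pos _ ⟨x₀, ?_⟩
    simp only [Function.mem_support]
    rw [hf1 rfl]
    norm_num
  rw [hfint] at hpos
  exact lt_irrefl _ hpos

/-- Existence of a far-forward orbit point in any nonempty open set. -/
theorem exists_add_nsmul_mem (v w : ∀ i, AddCircle (T i))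
    (hv : ∀ ξ : ι → ℤ, ξ ≠ 0 → charF T ξ v ≠ 1)
    {U : Set (∀ i, AddCircle (T i))} (hU : IsOpen U) (hne : U.Nonempty) (K : ℕ) :
    ∃ k : ℕ, K ≤ k ∧ w + k • v ∈ U := by
  have hd := dense_forward_orbit v hv
  set c := w + K • v with hc
  have hd2 : Dense (range fun k : ℕ => c + k • v) := by
    have himg : (fun x => c + x) '' (range fun k : ℕ => k • v)
        = range fun k : ℕ => c + k • v := by
      ext x
      constructor
      · rintro ⟨-, ⟨k, rfl⟩, rfl⟩; exact ⟨k, rfl⟩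
      · rintro ⟨k, rfl⟩; exact ⟨k • v, ⟨k, rfl⟩, rfl⟩
    rw [← himg]
    exact (Homeomorph.addLeft c).isDenseEmbedding.dense_image.mpr hd
  obtain ⟨x, hxmem, hxU⟩ := hd2.exists_mem_open hU hne
  obtain ⟨k, rfl⟩ := hxmem
  refine ⟨K + k, Nat.le_add_right _ _, ?_⟩
  rw [add_nsmul, ← add_assoc, ← hc]
  exact hxU

end Weyl

end KroneckerAux

open KroneckerAux in
/-- Timing lemma for the proofs of Propositions 1 and 2: with incommensurable frequencies
`(p i)⁻¹` and `h i > l j` for all `i ≠ j`, for every oscillator `r` and every time `t₀` there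
is a later start `a` of a complete low (inhibition-off) cycle of `r` during which inhibition
is on in all other oscillators. -/
theorem exists_unopposed_low_cycle (n : ℕ) (h l φ p : Fin n → ℝ)
    (hp : ∀ i, p i = h i + l i) (hh : ∀ i, 0 < h i) (hl : ∀ i, 0 < l i)
    (hfreq : LinearIndependent ℚ (fun i => (p i)⁻¹))
    (hdom : ∀ i j, i ≠ j → h i > l j)
    (r : Fin n) (t₀ : ℝ) :
    ∃ a : ℝ, t₀ ≤ a ∧ (∃ k : ℤ, a = φ r + h r + (k : ℝ) * p r) ∧
      (∀ s ∈ Set.Ico a (a + l r), ¬ inhibOn n φ p h r s) ∧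
      (∀ i, i ≠ r → ∀ s ∈ Set.Icc a (a + l r), inhibOn n φ p h i s) := by
  classical
  have hppos : ∀ i, 0 < p i := fun i => by rw [hp i]; exact add_pos (hh i) (hl i)
  haveI : ∀ i : {i : Fin n // i ≠ r}, Fact (0 < p i.1) := fun i => ⟨hppos i.1⟩
  set T : {i : Fin n // i ≠ r} → ℝ := fun i => p i.1 with hTdef
  set v : ∀ i : {i : Fin n // i ≠ r}, AddCircle (T i) :=
    fun i => ((p r : ℝ) : AddCircle (T i)) with hvdef
  set w : ∀ i : {i : Fin n // i ≠ r}, AddCircle (T i) :=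
    fun i => ((φ r + h r - φ i.1 : ℝ) : AddCircle (T i)) with hwdef
  -- character nonvanishing from rational independence of frequencies
  have hv : ∀ ξ : {i : Fin n // i ≠ r} → ℤ, ξ ≠ 0 → charF T ξ v ≠ 1 := by
    intro ξ hξ hone
    set si : ℝ := ∑ i, (ξ i : ℝ) * (p r) / (T i) with hsidef
    have hval : charF T ξ v = Complex.exp ((si : ℂ) * (2 * Real.pi * Complex.I)) := by
      rw [charF_apply]
      have hfac : ∀ i : {i : Fin n // i ≠ r},
          fourier (ξ i) (v i) = Complex.exp (2 * Real.pi * Complex.I * (ξ i) * (p r) / (T i)) :=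
        fun i => fourier_coe_apply
      rw [Finset.prod_congr rfl (fun i _ => hfac i), ← Complex.exp_sum]
      congr 1
      rw [hsidef]
      push_cast
      rw [Finset.sum_mul]
      refine Finset.sum_congr rfl (fun i _ => ?_)
      ring
    rw [hval, Complex.exp_eq_one_iff] at hone
    obtain ⟨m, hm⟩ := hone
    have h2pi : (2 * Real.pi * Complex.I : ℂ) ≠ 0 := by
      simp [Real.pi_ne_zero, Complex.I_ne_zero]
    have hsim : (si : ℂ) = (m : ℂ) := mul_right_cancel₀ h2pi hm
    have hsir : si = (m : ℝ) := by exact_mod_cast hsim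
    -- build the rational relation
    set g : Fin n → ℚ := fun j => if hj : j = r then (-m : ℚ) else (ξ ⟨j, hj⟩ : ℚ) with hgdef
    have hgr : g r = (-m : ℚ) := by simp [hgdef]
    have hgne : ∀ i : {i : Fin n // i ≠ r}, g i.1 = (ξ i : ℚ) := by
      intro i
      simp only [hgdef, dif_neg i.2]
    have hA : ∑ i : {i : Fin n // i ≠ r}, (ξ i : ℝ) * (p i.1)⁻¹ = (m : ℝ) * (p r)⁻¹ := by
      have hfac2 : ∀ i : {i : Fin n // i ≠ r},
          (ξ i : ℝ) * (p r) / (T i) = p r * ((ξ i : ℝ) * (p i.1)⁻¹) := by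
        intro i
        have : T i = p i.1 := rfl
        rw [this]
        field_simp
      have hsp : si = p r * ∑ i : {i : Fin n // i ≠ r}, (ξ i : ℝ) * (p i.1)⁻¹ := by
        rw [hsidef, Finset.mul_sum]
        exact Finset.sum_congr rfl (fun i _ => hfac2 i)
      rw [hsp] at hsir
      have hAd : (∑ i : {i : Fin n // i ≠ r}, (ξ i : ℝ) * (p i.1)⁻¹) = (m : ℝ) / p r := by
        rw [eq_div_iff (hppos r).ne']
        linarith [hsir]
      rw [hAd, div_eq_mul_inv]
    have hzero : ∑ j, g j • (p j)⁻¹ = (0 : ℝ) := by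
      rw [← Finset.sum_erase_add _ _ (Finset.mem_univ r)]
      have he : ∑ j ∈ Finset.univ.erase r, g j • (p j)⁻¹
          = ∑ i : {i : Fin n // i ≠ r}, g i.1 • (p i.1)⁻¹ :=
        Finset.sum_subtype _ (fun x => by simp [Finset.mem_erase]) _
      rw [he]
      have he2 : ∑ i : {i : Fin n // i ≠ r}, g i.1 • (p i.1)⁻¹
          = ∑ i : {i : Fin n // i ≠ r}, (ξ i : ℝ) * (p i.1)⁻¹ := by
        refine Finset.sum_congr rfl (fun i _ => ?_)
        rw [hgne i, Rat.smul_def]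
        push_cast
        ring
      rw [he2, hA, hgr, Rat.smul_def]
      push_cast
      ring
    have hallzero := Fintype.linearIndependent_iff.mp hfreq g hzero
    apply hξ
    funext i
    have hz := hallzero i.1
    rw [hgne i] at hz
    exact_mod_cast hz
  -- target set
  set U : Set (∀ i : {i : Fin n // i ≠ r}, AddCircle (T i)) :=
    Set.univ.pi (fun i => (QuotientAddGroup.mk '' Set.Ioo (0:ℝ) (h i.1 - l r))) with hUdef
  have hgap : ∀ i : {i : Fin n // i ≠ r}, 0 < h i.1 - l r :=
    fun i => sub_pos.mpr (hdom i.1 r i.2)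
  have hUopen : IsOpen U := by
    refine isOpen_set_pi Set.finite_univ (fun i _ => ?_)
    exact QuotientAddGroup.isOpenMap_coe _ isOpen_Ioo
  have hUne : U.Nonempty := by
    refine ⟨fun i => QuotientAddGroup.mk ((h i.1 - l r)/2), fun i _ => ?_⟩
    exact ⟨(h i.1 - l r)/2, ⟨by linarith [hgap i], by linarith [hgap i]⟩, rfl⟩
  -- choose K with t₀ ≤ φ r + h r + K * p r
  obtain ⟨K, hK⟩ : ∃ K : ℕ, t₀ ≤ φ r + h r + K * p r := by
    obtain ⟨K, hK⟩ := exists_nat_ge ((t₀ - φ r - h r) / p r)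
    refine ⟨K, ?_⟩
    rw [div_le_iff₀ (hppos r)] at hK
    linarith
  obtain ⟨k, hkK, hkU⟩ := exists_add_nsmul_mem v w hv hUopen hUne K
  set a : ℝ := φ r + h r + k * p r with hadef
  have hta : t₀ ≤ a := by
    have hmono : (K : ℝ) * p r ≤ (k : ℝ) * p r := by
      apply mul_le_mul_of_nonneg_right _ (hppos r).le
      exact_mod_cast hkK
    rw [hadef]; linarith
  refine ⟨a, hta, ⟨(k : ℤ), by push_cast; ring⟩, ?_, ?_⟩
  · -- no inhibition of r during the low cycle
    rintro s ⟨hs1, hs2⟩ ⟨m, hm1, hm2⟩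
    set d : ℤ := (k : ℤ) - m with hddef
    have hd : s - φ r - (m : ℝ) * p r = h r + (s - a) + (d : ℝ) * p r := by
      rw [hddef, hadef]; push_cast; ring
    rw [hd] at hm1 hm2
    have hsa1 : 0 ≤ s - a := by linarith
    have hsa2 : s - a < l r := by linarith
    have hpr : p r = h r + l r := hp r
    rcases lt_trichotomy d 0 with hc | hc | hc
    · have hint : d ≤ -1 := by omega
      have h1 : (d : ℝ) ≤ -1 := by exact_mod_cast hint
      have hxp : (d : ℝ) * p r ≤ -1 * p r :=
        mul_le_mul_of_nonneg_right h1 (hppos r).le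
      linarith
    · rw [hc] at hm2
      push_cast at hm2
      linarith
    · have hint : (1 : ℤ) ≤ d := hc
      have h1 : (1 : ℝ) ≤ (d : ℝ) := by exact_mod_cast hint
      have hxp : (1 : ℝ) * p r ≤ (d : ℝ) * p r :=
        mul_le_mul_of_nonneg_right h1 (hppos r).le
      linarith
  · -- inhibition on in all others
    intro i hir s hs
    set i' : {i : Fin n // i ≠ r} := ⟨i, hir⟩ with hi'def
    have hmem := hkU i' (Set.mem_univ i')
    have hpt : (w + k • v) i' = ((a - φ i : ℝ) : AddCircle (T i')) := by
      have hsplit : (w + k • v) i' = w i' + k • (v i') := rfl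
      rw [hsplit]
      show ((φ r + h r - φ i : ℝ) : AddCircle (T i')) + k • ((p r : ℝ) : AddCircle (T i')) = _
      rw [← QuotientAddGroup.mk_nsmul, ← QuotientAddGroup.mk_add]
      congr 1
      rw [hadef]
      push_cast [nsmul_eq_mul]
      ring
    rw [hpt] at hmem
    obtain ⟨y, hy, heq⟩ := hmem
    have hsub : (-y + (a - φ i) : ℝ) ∈ AddSubgroup.zmultiples (T i') :=
      (QuotientAddGroup.eq (s := AddSubgroup.zmultiples (T i'))).mp heq
    obtain ⟨m, hm⟩ := AddSubgroup.mem_zmultiples_iff.mp hsub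
    rw [zsmul_eq_mul] at hm
    have hTi : T i' = p i := rfl
    rw [hTi] at hm
    have hkey : s - φ i - (m : ℝ) * p i = (s - a) + y := by linarith
    refine ⟨m, ?_, ?_⟩
    · rw [hkey]
      have := hs.1
      have := hy.1
      linarith
    · rw [hkey]
      have h1 := hs.2
      have h2 := hy.2
      linarith
end
end

section
/- Let m : ℕ with 1 ≤ m, let S : Fin (m + 1) → Type with each S i finite and nonempty, and let C ⊆ ((i : Fin (m + 1)) → S i) be a nonempty set of allowed configurations. Define the hub domain Hd = {σ : (i : Fin m) → S i.castSucc | ∃ a : S (Fin.last m), Fin.snoc σ a ∈ C}. Then for every full assignment v : (i : Fin (m + 1)) → S i and every η ∈ Hd, the pair (v, η) satisfies all the pairwise hub constraints — namely η i = v i.castSucc for every i : Fin m, and Fin.snoc η (v (Fin.last m)) ∈ C — if and only if η = fun i => v i.castSucc and v ∈ C. Consequently, the map sending v ∈ C to (v, fun i => v i.castSucc) is a bijection from C onto the set of pairs (v, η) with η ∈ Hd satisfying all the pairwise hub constraints. -/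
/-- Correctness of the hub construction for high-order consistency conditions: with hub
domain `Hd` consisting of the tuples over the first `m` variables extendable to an allowed
configuration in `C`, a pair `(v, η)` with `η ∈ Hd` satisfies all the pairwise hub
constraints iff `η` is the restriction of `v` and `v ∈ C`; consequently
`v ↦ (v, fun i => v i.castSucc)` is a bijection from `C` onto the pairwise-consistent
pairs. -/
theorem hub_construction_correct (m : ℕ) (hm : 1 ≤ m) (S : Fin (m + 1) → Type*)
    [∀ i, Fintype (S i)] [∀ i, Nonempty (S i)]
    (C : Set ((i : Fin (m + 1)) → S i)) (hC : C.Nonempty) :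
    (∀ (v : (i : Fin (m + 1)) → S i) (η : (i : Fin m) → S i.castSucc),
      η ∈ {σ : (i : Fin m) → S i.castSucc | ∃ a : S (Fin.last m), Fin.snoc σ a ∈ C} →
      (((∀ i : Fin m, η i = v i.castSucc) ∧ Fin.snoc η (v (Fin.last m)) ∈ C) ↔
        ((η = fun i : Fin m => v i.castSucc) ∧ v ∈ C))) ∧
    Set.BijOn
      (fun v : (i : Fin (m + 1)) → S i => (v, fun i : Fin m => v i.castSucc))
      C
      {p : ((i : Fin (m + 1)) → S i) × ((i : Fin m) → S i.castSucc) |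
        p.2 ∈ {σ : (i : Fin m) → S i.castSucc | ∃ a : S (Fin.last m), Fin.snoc σ a ∈ C} ∧
        (∀ i : Fin m, p.2 i = p.1 i.castSucc) ∧
        Fin.snoc p.2 (p.1 (Fin.last m)) ∈ C} := by
  have key : ∀ (v : (i : Fin (m + 1)) → S i),
      Fin.snoc (fun i : Fin m => v i.castSucc) (v (Fin.last m)) = v := by
    intro v
    exact Fin.snoc_init_self v
  constructor
  · intro v η _
    constructor
    · rintro ⟨h1, h2⟩
      have hη : η = fun i : Fin m => v i.castSucc := funext h1
      subst hη
      rw [key v] at h2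
      exact ⟨rfl, h2⟩
    · rintro ⟨hη, hv⟩
      subst hη
      refine ⟨fun i => rfl, ?_⟩
      rwa [key v]
  · refine ⟨fun v hv => ⟨⟨v (Fin.last m), by rwa [key v]⟩, fun i => rfl, by rwa [key v]⟩,
      fun v _ w _ h => congrArg Prod.fst h, ?_⟩
    rintro ⟨v, η⟩ ⟨_, h2, h3⟩
    have hη : η = fun i : Fin m => v i.castSucc := funext h2
    subst hη
    rw [key v] at h3
    exact ⟨v, h3, rfl⟩
end
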